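/- Inversion of permutations intertwines the block composition with the left composition: for permutations σ of {1,…,n} and ν of {1,…,m} and i ∈ {1,…,n}, one has (B_i(σ, ν))^{−1} = σ^{−1} ∘←_i ν^{−1}, where σ^{−1} ∘←_i ν^{−1} is the permutation of {1,…,n+m−1} obtained from Inc_{m−1}^{i}(σ^{−1}) by replacing the letter i by the word Inc_{i−1}^{0}(ν^{−1}). (This expresses that the map E_σ ↦ E_{σ^{−1}} is an isomorphism from the right associative operad to the left associative operad of permutations.) -/

import Mathlib

/-- Increment by `α` every letter strictly greater than `β`. -/
def Inc (α β : ℕ) (u : List ℕ) : List ℕ := u.map fun a => if β < a then a + α else a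

/-- Maximal letter of a word. -/
def maxLetter (v : List ℕ) : ℕ := v.foldr max 0

/-- A packed word whose letter set is exactly `{1, …, k}`. -/
def IsPackedOn (k : ℕ) (w : List ℕ) : Prop := w.toFinset = Finset.Icc 1 k

/-- A packed word. -/
def IsPacked (w : List ℕ) : Prop := ∃ k, IsPackedOn k w

/-- A permutation of `{1, …, n}` identified with the word `σ(1) ⋯ σ(n)`. -/
def IsPermWord (n : ℕ) (σ : List ℕ) : Prop :=
  σ.length = n ∧ σ.toFinset = Finset.Icc 1 n

/-- `σ` is the standardization of `w`: a permutation word of `{1, …, n}` with the same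
inversions as `w` (0-based indexing). -/
def IsStdOf (w σ : List ℕ) : Prop :=
  IsPermWord w.length σ ∧
    ∀ i j : ℕ, i < j → j < w.length →
      (w.getD j 0 < w.getD i 0 ↔ σ.getD j 0 < σ.getD i 0)

/-- The weakly increasing rearrangement (composition type) of a word. -/
def chi (w : List ℕ) : List ℕ := List.insertionSort (· ≤ ·) w

/-- Right composition `u ∘→_i v` of packed words (`i` is 1-based). -/
def rightComp (u : List ℕ) (i : ℕ) (v : List ℕ) : List ℕ :=
  Inc (maxLetter v - 1) (u.getD (i - 1) 0) (u.take (i - 1))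
    ++ Inc (u.getD (i - 1) 0 - 1) 0 v
    ++ Inc (maxLetter v - 1) (u.getD (i - 1) 0 - 1) (u.drop i)

/-- Left composition `u ∘←_i v` of packed words: replace in `Inc (m-1) i u` every
occurrence of the letter `i` by the word `Inc (i-1) 0 v`, where `m` is the maximal
letter of `v`. -/
def leftComp (u : List ℕ) (i : ℕ) (v : List ℕ) : List ℕ :=
  u.flatMap fun a =>
    if a = i then Inc (i - 1) 0 v else [if i < a then a + (maxLetter v - 1) else a]

/-- Block composition `B_i(α, β)` of permutation words (`i` is 1-based, `β` a permutation
of `{1, …, m}` with `m = β.length`). -/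
def blockComp (α : List ℕ) (i : ℕ) (β : List ℕ) : List ℕ :=
  Inc (β.length - 1) (α.getD (i - 1) 0) (α.take (i - 1))
    ++ Inc (α.getD (i - 1) 0 - 1) 0 β
    ++ Inc (β.length - 1) (α.getD (i - 1) 0 - 1) (α.drop i)

/-- The inverse of a permutation word. -/
def invWord (σ : List ℕ) : List ℕ :=
  (List.range σ.length).map fun p => σ.idxOf (p + 1) + 1

/-- The right action of a permutation word `σ` of `{1, …, n}` on a packed word with
letter set `{1, …, n}`: the `p`-th letter of `u · σ` is `σ⁻¹(u(p))`. -/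
def permAct (u σ : List ℕ) : List ℕ := u.map fun a => (invWord σ).getD (a - 1) 0

/-- The identity permutation word of `{1, …, m}`. -/
def idWord (m : ℕ) : List ℕ := (List.range m).map (· + 1)

/-- `First k u`: keep only the `k` leftmost occurrences of each letter of `u`. -/
def First (k : ℕ) (u : List ℕ) : List ℕ :=
  (List.range u.length).filterMap fun p =>
    if (u.take p).count (u.getD p 0) < k then some (u.getD p 0) else none


section Aux

lemma Inc_length (α β : ℕ) (u : List ℕ) : (Inc α β u).length = u.length := by simp [Inc]

lemma Inc_getD (α β : ℕ) (u : List ℕ) (p : ℕ) (hp : p < u.length) :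
    (Inc α β u).getD p 0 = if β < u.getD p 0 then u.getD p 0 + α else u.getD p 0 := by
  rw [List.getD_eq_getElem _ _ (by simpa [Inc_length] using hp),
    List.getD_eq_getElem _ _ hp]
  simp [Inc]

lemma invWord_length (σ : List ℕ) : (invWord σ).length = σ.length := by simp [invWord]

lemma invWord_getD (σ : List ℕ) (q : ℕ) (hq : q < σ.length) :
    (invWord σ).getD q 0 = σ.idxOf (q + 1) + 1 := by
  rw [List.getD_eq_getElem _ _ (by simpa [invWord_length] using hq)]
  simp [invWord]

lemma perm_nodup {n : ℕ} {σ : List ℕ} (h : IsPermWord n σ) : σ.Nodup := by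
  have hc : σ.toFinset.card = σ.length := by
    rw [h.2, Nat.card_Icc, h.1]; omega
  rw [List.card_toFinset] at hc
  have := σ.dedup_sublist.eq_of_length hc
  rw [← List.dedup_eq_self]; exact this

lemma perm_mem {n : ℕ} {σ : List ℕ} (h : IsPermWord n σ) {q : ℕ} (h1 : 1 ≤ q) (h2 : q ≤ n) :
    q ∈ σ := by
  rw [← List.mem_toFinset, h.2, Finset.mem_Icc]; exact ⟨h1, h2⟩

lemma perm_getD_mem {n : ℕ} {σ : List ℕ} (h : IsPermWord n σ) {p : ℕ} (hp : p < n) :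
    1 ≤ σ.getD p 0 ∧ σ.getD p 0 ≤ n := by
  have hp' : p < σ.length := by rw [h.1]; exact hp
  rw [List.getD_eq_getElem _ _ hp']
  have : σ[p] ∈ σ.toFinset := List.mem_toFinset.2 (σ.getElem_mem hp')
  rw [h.2, Finset.mem_Icc] at this; exact this

lemma perm_indexOf_getD {n : ℕ} {σ : List ℕ} (h : IsPermWord n σ) {p : ℕ} (hp : p < n) :
    σ.idxOf (σ.getD p 0) = p := by
  have hp' : p < σ.length := by rw [h.1]; exact hp
  rw [List.getD_eq_getElem _ _ hp']
  exact List.Nodup.idxOf_getElem (perm_nodup h) p hp'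

lemma indexOf_lt {n : ℕ} {σ : List ℕ} (h : IsPermWord n σ) {q : ℕ} (h1 : 1 ≤ q) (h2 : q ≤ n) :
    σ.idxOf q < n := by
  rw [← h.1]; exact List.idxOf_lt_length_iff.2 (perm_mem h h1 h2)

lemma getD_indexOf {n : ℕ} {σ : List ℕ} (h : IsPermWord n σ) {q : ℕ} (h1 : 1 ≤ q) (h2 : q ≤ n) :
    σ.getD (σ.idxOf q) 0 = q := by
  have := indexOf_lt h h1 h2
  have hlt : σ.idxOf q < σ.length := by rw [h.1]; exact indexOf_lt h h1 h2
  rw [List.getD_eq_getElem _ _ hlt]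
  exact List.getElem_idxOf hlt

lemma le_maxLetter {a : ℕ} {l : List ℕ} (h : a ∈ l) : a ≤ maxLetter l := by
  induction l with
  | nil => simp at h
  | cons b t ih =>
    simp only [maxLetter, List.foldr_cons] at *
    rcases List.mem_cons.1 h with h | h
    · omega
    · have := ih h; omega

lemma maxLetter_le {m : ℕ} {l : List ℕ} (h : ∀ a ∈ l, a ≤ m) : maxLetter l ≤ m := by
  induction l with
  | nil => simp [maxLetter]
  | cons b t ih =>
    simp only [maxLetter, List.foldr_cons] at *
    have h1 := h b (by simp)
    have h2 := ih fun a ha => h a (by simp [ha])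
    omega

lemma invWord_perm {n : ℕ} {σ : List ℕ} (h : IsPermWord n σ) : IsPermWord n (invWord σ) := by
  have hmem : ∀ a ∈ invWord σ, 1 ≤ a ∧ a ≤ n := by
    intro a ha
    simp only [invWord, List.mem_map, List.mem_range] at ha
    obtain ⟨p, hp, rfl⟩ := ha
    rw [h.1] at hp
    have := indexOf_lt h (by omega) (by omega : p + 1 ≤ n)
    omega
  have hnd : (invWord σ).Nodup := by
    apply List.Nodup.map_on _ List.nodup_range
    intro p hp p' hp' he
    simp only [List.mem_range, h.1] at hp hp'
    have e1 := getD_indexOf h (by omega) (by omega : p + 1 ≤ n)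
    have e2 := getD_indexOf h (by omega) (by omega : p' + 1 ≤ n)
    have : σ.idxOf (p + 1) = σ.idxOf (p' + 1) := by omega
    rw [this, e2] at e1; omega
  constructor
  · rw [invWord_length, h.1]
  · apply Finset.eq_of_subset_of_card_le
    · intro a ha
      rw [List.mem_toFinset] at ha
      rw [Finset.mem_Icc]; exact hmem a ha
    · rw [Nat.card_Icc, List.toFinset_card_of_nodup hnd, invWord_length, h.1]; omega

lemma maxLetter_invWord {m : ℕ} {ν : List ℕ} (h : IsPermWord m ν) (hm : 1 ≤ m) :
    maxLetter (invWord ν) = m := by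
  have h' := invWord_perm h
  have h1 : m ≤ maxLetter (invWord ν) := le_maxLetter (perm_mem h' hm le_rfl)
  have h2 : maxLetter (invWord ν) ≤ m := maxLetter_le fun a ha =>
    (Finset.mem_Icc.1 (by rw [← h'.2]; exact List.mem_toFinset.2 ha)).2
  omega

lemma flatMap_eq_map {f : ℕ → List ℕ} {f' : ℕ → ℕ} {i : ℕ} {l : List ℕ}
    (hf : ∀ a, a ≠ i → f a = [f' a]) (h : ∀ a ∈ l, a ≠ i) :
    l.flatMap f = l.map f' := by
  induction l with
  | nil => simp
  | cons b t ih =>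
    rw [List.flatMap_cons, List.map_cons, hf b (h b (by simp)),
      ih fun a ha => h a (by simp [ha])]
    simp

lemma invWord_eq_of {N : ℕ} {τ ρ : List ℕ}
    (hτl : τ.length = N)
    (hτv : ∀ p < N, 1 ≤ τ.getD p 0 ∧ τ.getD p 0 ≤ N)
    (hρl : ρ.length = N)
    (h : ∀ p < N, ρ.getD (τ.getD p 0 - 1) 0 = p + 1) :
    invWord τ = ρ := by
  have hsurj : ∀ q < N, ∃ p < N, τ.getD p 0 = q + 1 := by
    have hinj : Function.Injective
        (fun p : Fin N => (⟨τ.getD p.1 0 - 1, by have := hτv p.1 p.2; omega⟩ : Fin N)) := by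
      intro p p' he
      have e1 := h p.1 p.2
      have e2 := h p'.1 p'.2
      have : τ.getD p.1 0 - 1 = τ.getD p'.1 0 - 1 := by
        simpa using congrArg Fin.val he
      rw [this, e2] at e1
      exact Fin.ext (by omega)
    have hsur := Finite.surjective_of_injective hinj
    intro q hq
    obtain ⟨p, hp⟩ := hsur ⟨q, hq⟩
    refine ⟨p.1, p.2, ?_⟩
    have : τ.getD p.1 0 - 1 = q := by simpa using congrArg Fin.val hp
    have := (hτv p.1 p.2).1
    omega
  apply List.ext_getElem (by rw [invWord_length, hτl, hρl])
  intro q hq1 hq2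
  rw [invWord_length, hτl] at hq1
  rw [← List.getD_eq_getElem (invWord τ) 0 (by rwa [invWord_length, hτl]),
    ← List.getD_eq_getElem ρ 0 (by rwa [hρl]),
    invWord_getD τ q (by rwa [hτl])]
  obtain ⟨p, hp, hpe⟩ := hsurj q hq1
  have hmem : q + 1 ∈ τ := by
    have hp' : p < τ.length := by omega
    rw [← hpe, List.getD_eq_getElem _ _ hp']
    exact τ.getElem_mem hp' 
  have hidx : τ.idxOf (q + 1) < τ.length := List.idxOf_lt_length_iff.2 hmem
  have hτi : τ.getD (τ.idxOf (q + 1)) 0 = q + 1 := by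
    rw [List.getD_eq_getElem _ _ hidx]; exact List.getElem_idxOf hidx
  have := h (τ.idxOf (q + 1)) (by omega)
  rw [hτi] at this
  simpa using this.symm
lemma getD_take (u : List ℕ) (t p : ℕ) (hp : p < t) (hp2 : p < u.length) :
    (u.take t).getD p 0 = u.getD p 0 := by
  rw [List.getD_eq_getElem _ _ (by simp; omega), List.getD_eq_getElem _ _ hp2]
  simp

lemma getD_drop (u : List ℕ) (t p : ℕ) (hp : t + p < u.length) :
    (u.drop t).getD p 0 = u.getD (t + p) 0 := by
  rw [List.getD_eq_getElem _ _ (by simp; omega), List.getD_eq_getElem _ _ hp]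
  simp

lemma getD_map (f : ℕ → ℕ) (u : List ℕ) (p : ℕ) (hp : p < u.length) :
    (u.map f).getD p 0 = f (u.getD p 0) := by
  rw [List.getD_eq_getElem _ _ (by simpa using hp), List.getD_eq_getElem _ _ hp]
  simp
lemma zone1 {n m i k p : ℕ} {σ ρ : List ℕ}
    (hσ : IsPermWord n σ) (hm : 1 ≤ m) (hin : i ≤ n)
    (hk1 : 1 ≤ k) (hkn : k ≤ n)
    (hidxk : σ.idxOf k = i - 1)
    (hρ1 : ∀ q, q < k - 1 → ρ.getD q 0
      = if i < σ.idxOf (q + 1) + 1 then σ.idxOf (q + 1) + 1 + (m - 1)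
        else σ.idxOf (q + 1) + 1)
    (hρ3 : ∀ q, k - 1 + m ≤ q → q < n + m - 1 → ρ.getD q 0
      = if i < σ.idxOf (q - m + 2) + 1 then σ.idxOf (q - m + 2) + 1 + (m - 1)
        else σ.idxOf (q - m + 2) + 1)
    (hp : p < i - 1)
    (a : ℕ)
    (ha : a = if k < σ.getD p 0 then σ.getD p 0 + (m - 1) else σ.getD p 0) :
    ρ.getD (a - 1) 0 = p + 1 := by
  obtain ⟨ha1, ha2⟩ := perm_getD_mem hσ (show p < n by omega)
  have hidx : σ.idxOf (σ.getD p 0) = p := perm_indexOf_getD hσ (by omega)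
  have hne : σ.getD p 0 ≠ k := fun he => by rw [he, hidxk] at hidx; omega
  by_cases hak : k < σ.getD p 0
  · rw [ha, if_pos hak, hρ3 (σ.getD p 0 + (m - 1) - 1) (by omega) (by omega),
      show σ.getD p 0 + (m - 1) - 1 - m + 2 = σ.getD p 0 by omega, hidx,
      if_neg (by omega)]
  · rw [ha, if_neg hak, hρ1 (σ.getD p 0 - 1) (by omega),
      show σ.getD p 0 - 1 + 1 = σ.getD p 0 by omega, hidx, if_neg (by omega)]

lemma zone2 {m i k p : ℕ} {ν ρ : List ℕ}
    (hν : IsPermWord m ν) (hi1 : 1 ≤ i) (hk1 : 1 ≤ k)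
    (hρ2 : ∀ q, k - 1 ≤ q → q < k - 1 + m → ρ.getD q 0
      = ν.idxOf (q - (k - 1) + 1) + 1 + (i - 1))
    (hp1 : i - 1 ≤ p) (hp2 : p < i - 1 + m)
    (a : ℕ) (ha : a = ν.getD (p - (i - 1)) 0 + (k - 1)) :
    ρ.getD (a - 1) 0 = p + 1 := by
  obtain ⟨hb1, hb2⟩ := perm_getD_mem hν (show p - (i - 1) < m by omega)
  have hidx : ν.idxOf (ν.getD (p - (i - 1)) 0) = p - (i - 1) :=
    perm_indexOf_getD hν (by omega)
  rw [ha, hρ2 (ν.getD (p - (i - 1)) 0 + (k - 1) - 1) (by omega) (by omega),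
    show ν.getD (p - (i - 1)) 0 + (k - 1) - 1 - (k - 1) + 1
      = ν.getD (p - (i - 1)) 0 by omega, hidx]
  omega

lemma zone3 {n m i k p : ℕ} {σ ρ : List ℕ}
    (hσ : IsPermWord n σ) (hm : 1 ≤ m) (hi1 : 1 ≤ i)
    (hk1 : 1 ≤ k) (hkn : k ≤ n)
    (hidxk : σ.idxOf k = i - 1)
    (hρ1 : ∀ q, q < k - 1 → ρ.getD q 0
      = if i < σ.idxOf (q + 1) + 1 then σ.idxOf (q + 1) + 1 + (m - 1)
        else σ.idxOf (q + 1) + 1)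
    (hρ3 : ∀ q, k - 1 + m ≤ q → q < n + m - 1 → ρ.getD q 0
      = if i < σ.idxOf (q - m + 2) + 1 then σ.idxOf (q - m + 2) + 1 + (m - 1)
        else σ.idxOf (q - m + 2) + 1)
    (hp1 : i - 1 + m ≤ p) (hp2 : p < n + m - 1)
    (a : ℕ)
    (ha : a = if k - 1 < σ.getD (p - m + 1) 0 then σ.getD (p - m + 1) 0 + (m - 1)
      else σ.getD (p - m + 1) 0) :
    ρ.getD (a - 1) 0 = p + 1 := by
  obtain ⟨ha1, ha2⟩ := perm_getD_mem hσ (show p - m + 1 < n by omega)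
  have hidx : σ.idxOf (σ.getD (p - m + 1) 0) = p - m + 1 :=
    perm_indexOf_getD hσ (by omega)
  have hne : σ.getD (p - m + 1) 0 ≠ k := fun he => by rw [he, hidxk] at hidx; omega
  by_cases hak : k - 1 < σ.getD (p - m + 1) 0
  · rw [ha, if_pos hak,
      hρ3 (σ.getD (p - m + 1) 0 + (m - 1) - 1) (by omega) (by omega),
      show σ.getD (p - m + 1) 0 + (m - 1) - 1 - m + 2 = σ.getD (p - m + 1) 0 by omega,
      hidx, if_pos (by omega)]
    omega
  · rw [ha, if_neg hak, hρ1 (σ.getD (p - m + 1) 0 - 1) (by omega),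
      show σ.getD (p - m + 1) 0 - 1 + 1 = σ.getD (p - m + 1) 0 by omega,
      hidx, if_pos (by omega)]
    omega

end Aux

/-- Inversion of permutations intertwines the block composition with the left
composition: `(B_i(σ, ν))⁻¹ = σ⁻¹ ∘←_i ν⁻¹`. -/
theorem invWord_blockComp (n m i : ℕ) (σ ν : List ℕ)
    (hσ : IsPermWord n σ) (hν : IsPermWord m ν)
    (hi : i ∈ Finset.Icc 1 n) (hm : 1 ≤ m) :
    invWord (blockComp σ i ν) = leftComp (invWord σ) i (invWord ν) := by
  rw [Finset.mem_Icc] at hi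
  obtain ⟨hi1, hin⟩ := hi
  have hσl : σ.length = n := hσ.1
  have hνl : ν.length = m := hν.1
  have hn1 : 1 ≤ n := le_trans hi1 hin
  set k := σ.getD (i - 1) 0 with hkdef
  clear_value k
  obtain ⟨hk1, hkn⟩ := perm_getD_mem hσ (show i - 1 < n by omega)
  have hmax : maxLetter (invWord ν) = m := maxLetter_invWord hν hm
  have hu := invWord_perm hσ
  have hul : (invWord σ).length = n := hu.1
  have hv := invWord_perm hν
  have hvl : (invWord ν).length = m := hv.1
  have hidxk : σ.idxOf k = i - 1 := by
    rw [hkdef]; exact perm_indexOf_getD hσ (show i - 1 < n by omega)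
  have huk : (invWord σ).getD (k - 1) 0 = i := by
    rw [invWord_getD σ (k - 1) (by omega), show k - 1 + 1 = k by omega, hidxk]
    omega
  -- split invWord σ around the letter i
  have hsplit : invWord σ
      = (invWord σ).take (k - 1) ++ i :: (invWord σ).drop k := by
    conv_lhs => rw [← List.take_append_drop (k - 1) (invWord σ)]
    congr 1
    rw [List.drop_eq_getElem_cons (show k - 1 < (invWord σ).length by omega)]
    congr 1
    · rw [← List.getD_eq_getElem _ 0 (show k - 1 < (invWord σ).length by omega)]
      exact huk
    · congr 1
      omega
  have hund : (invWord σ).Nodup := perm_nodup hu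
  have hnd2 : ((invWord σ).take (k - 1) ++ i :: (invWord σ).drop k).Nodup := hsplit ▸ hund
  rw [List.nodup_append'] at hnd2
  have hiT : ∀ a ∈ (invWord σ).take (k - 1), a ≠ i := by
    rintro a ha rfl
    exact hnd2.2.2 ha (by simp)
  have hiD : ∀ a ∈ (invWord σ).drop k, a ≠ i := by
    rintro a ha rfl
    exact (List.nodup_cons.1 hnd2.2.1).1 ha
  -- the right-hand side, in block form
  have hRHS : leftComp (invWord σ) i (invWord ν)
      = ((invWord σ).take (k - 1)).map (fun a => if i < a then a + (m - 1) else a)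
        ++ (Inc (i - 1) 0 (invWord ν)
        ++ ((invWord σ).drop k).map (fun a => if i < a then a + (m - 1) else a)) := by
    simp only [leftComp, hmax]
    conv_lhs => rw [hsplit]
    rw [List.flatMap_append, List.flatMap_cons,
      flatMap_eq_map (f' := fun a => if i < a then a + (m - 1) else a)
        (fun a ha => by rw [if_neg ha]) hiT,
      flatMap_eq_map (f' := fun a => if i < a then a + (m - 1) else a)
        (fun a ha => by rw [if_neg ha]) hiD,
      if_pos rfl]
  rw [hRHS]
  set P := ((invWord σ).take (k - 1)).map (fun a => if i < a then a + (m - 1) else a) with hP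
  set M := Inc (i - 1) 0 (invWord ν) with hM
  set S := ((invWord σ).drop k).map (fun a => if i < a then a + (m - 1) else a) with hS
  clear_value P M S
  have hPl : P.length = k - 1 := by simp [hP]; omega
  have hMl : M.length = m := by simp [hM, Inc_length, hvl]
  have hSl : S.length = n - k := by simp [hS]; omega
  -- the left-hand side, in block form
  have hτ : blockComp σ i ν
      = Inc (m - 1) k (σ.take (i - 1))
        ++ (Inc (k - 1) 0 ν ++ Inc (m - 1) (k - 1) (σ.drop i)) := by
    simp only [blockComp, hνl, ← hkdef, List.append_assoc]
  set τ := blockComp σ i ν with hτdef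
  clear_value τ
  have hAl : (Inc (m - 1) k (σ.take (i - 1))).length = i - 1 := by
    simp [Inc_length]; omega
  have hBl : (Inc (k - 1) 0 ν).length = m := by simp [Inc_length, hνl]
  have hCl : (Inc (m - 1) (k - 1) (σ.drop i)).length = n - i := by
    simp [Inc_length]; omega
  have hτl : τ.length = n + m - 1 := by
    rw [hτ]; simp only [List.length_append, hAl, hBl, hCl]; omega
  -- getD of τ in the three zones
  have hτ1 : ∀ p, p < i - 1 →
      τ.getD p 0 = if k < σ.getD p 0 then σ.getD p 0 + (m - 1) else σ.getD p 0 := by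
    intro p hp
    rw [hτ, List.getD_append _ _ _ _ (by omega),
      Inc_getD _ _ _ _ (by simp; omega),
      getD_take _ _ _ hp (by omega)]
  have hτ2 : ∀ p, i - 1 ≤ p → p < i - 1 + m →
      τ.getD p 0 = ν.getD (p - (i - 1)) 0 + (k - 1) := by
    intro p hp1 hp2
    rw [hτ, List.getD_append_right _ _ _ _ (by omega),
      List.getD_append _ _ _ _ (by omega), hAl,
      Inc_getD _ _ _ _ (by omega),
      if_pos (by have := perm_getD_mem hν (show p - (i-1) < m by omega); omega)]
  have hτ3 : ∀ p, i - 1 + m ≤ p → p < n + m - 1 →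
      τ.getD p 0 = if k - 1 < σ.getD (p - m + 1) 0
        then σ.getD (p - m + 1) 0 + (m - 1) else σ.getD (p - m + 1) 0 := by
    intro p hp1 hp2
    rw [hτ, List.getD_append_right _ _ _ _ (by omega),
      List.getD_append_right _ _ _ _ (by omega), hAl, hBl,
      Inc_getD _ _ _ _ (by simp; omega),
      getD_drop _ _ _ (by omega),
      show i + (p - (i - 1) - m) = p - m + 1 by omega]
  -- getD of the right-hand side in the three zones
  set ρ := P ++ (M ++ S) with hρdef
  clear_value ρ
  have hρl : ρ.length = n + m - 1 := by
    simp only [hρdef, List.length_append, hPl, hMl, hSl]; omega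
  have hρ1 : ∀ q, q < k - 1 →
      ρ.getD q 0 = if i < σ.idxOf (q + 1) + 1 then σ.idxOf (q + 1) + 1 + (m - 1)
        else σ.idxOf (q + 1) + 1 := by
    intro q hq
    rw [hρdef, List.getD_append _ _ _ _ (by omega), hP,
      getD_map _ _ _ (by simp; omega),
      getD_take _ _ _ hq (by omega),
      invWord_getD _ _ (by omega)]
  have hρ2 : ∀ q, k - 1 ≤ q → q < k - 1 + m →
      ρ.getD q 0 = ν.idxOf (q - (k - 1) + 1) + 1 + (i - 1) := by
    intro q hq1 hq2
    rw [hρdef, List.getD_append_right _ _ _ _ (by omega),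
      List.getD_append _ _ _ _ (by omega), hPl, hM,
      Inc_getD _ _ _ _ (by omega),
      if_pos (by have := perm_getD_mem hv (show q - (k-1) < m by omega); omega),
      invWord_getD _ _ (by omega)]
  have hρ3 : ∀ q, k - 1 + m ≤ q → q < n + m - 1 →
      ρ.getD q 0 = if i < σ.idxOf (q - m + 2) + 1 then σ.idxOf (q - m + 2) + 1 + (m - 1)
        else σ.idxOf (q - m + 2) + 1 := by
    intro q hq1 hq2
    rw [hρdef, List.getD_append_right _ _ _ _ (by omega),
      List.getD_append_right _ _ _ _ (by omega), hPl, hMl, hS,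
      getD_map _ _ _ (by simp; omega),
      getD_drop _ _ _ (by omega),
      show k + (q - (k - 1) - m) = q - m + 1 by omega,
      invWord_getD _ _ (by omega),
      show q - m + 1 + 1 = q - m + 2 by omega]
  -- conclude via the characterization of the inverse word
  apply invWord_eq_of hτl _ hρl
  · -- the main pointwise identity
    intro p hp
    rcases lt_or_ge p (i - 1) with hc1 | hc1
    · exact zone1 hσ hm hin (by omega) (by omega) hidxk hρ1 hρ3 hc1 _ (hτ1 p hc1)
    rcases lt_or_ge p (i - 1 + m) with hc2 | hc2
    · exact zone2 hν hi1 (by omega) hρ2 hc1 hc2 _ (hτ2 p hc1 hc2)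
    · exact zone3 hσ hm hi1 (by omega) (by omega) hidxk hρ1 hρ3 hc2 hp _ (hτ3 p hc2 hp)
  · -- value bounds for τ
    intro p hp
    rcases lt_or_ge p (i - 1) with hc1 | hc1
    · obtain ⟨ha1, ha2⟩ := perm_getD_mem hσ (show p < n by omega)
      rw [hτ1 p hc1]
      split <;> omega
    rcases lt_or_ge p (i - 1 + m) with hc2 | hc2
    · obtain ⟨hb1, hb2⟩ := perm_getD_mem hν (show p - (i - 1) < m by omega)
      rw [hτ2 p hc1 hc2]
      omega
    · obtain ⟨ha1, ha2⟩ := perm_getD_mem hσ (show p - m + 1 < n by omega)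
      rw [hτ3 p hc2 hp]
      split <;> omega
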